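/- Let 0 < α < 1. For each natural number n define c_n : ℝ × ℝ → ℝ by c_0(x,t) = cos x and, for n ≥ 1, c_n(x,t) = cos x · ∑_{k=0}^{n} (−1)^k t^(k(1−α)) / Γ(1 + k(1−α)) + t² sin x · ∑_{j=0}^{n−1} (−1)^j t^(j(1−α)) / Γ(j(1−α) + 3). Then for every n ≥ 0, every x ∈ ℝ and every t > 0, the sequence satisfies the variational iteration recursion c_{n+1}(x,t) = cos x + ∫₀ᵗ (1/Γ(1−α)) · d/dξ [ ∫₀^ξ (ξ−τ)^(−α) · ∂²c_n/∂x² (x,τ) dτ ] dξ + (t²/2) sin x. -/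

import Mathlib

open Real MeasureTheory

lemma real_beta {p q : ℝ} (hp : 0 < p) (hq : 0 < q) :
    ∫ u in (0:ℝ)..1, u ^ (p - 1) * (1 - u) ^ (q - 1) =
      Real.Gamma p * Real.Gamma q / Real.Gamma (p + q) := by
  have h := Complex.Gamma_mul_Gamma_eq_betaIntegral (s := (p:ℂ)) (t := (q:ℂ))
    (by simpa using hp) (by simpa using hq)
  have h2 : ((∫ u in (0:ℝ)..1, u ^ (p - 1) * (1 - u) ^ (q - 1) : ℝ) : ℂ) =
      ∫ u in (0:ℝ)..1, ((u ^ (p - 1) * (1 - u) ^ (q - 1) : ℝ) : ℂ) :=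
    (RCLike.intervalIntegral_ofReal (𝕜 := ℂ)
      (f := fun u : ℝ => u ^ (p - 1) * (1 - u) ^ (q - 1)) (μ := volume) (a := 0) (b := 1)).symm
  have hβ : Complex.betaIntegral (p:ℂ) (q:ℂ) =
      ((∫ u in (0:ℝ)..1, u ^ (p - 1) * (1 - u) ^ (q - 1) : ℝ) : ℂ) := by
    rw [Complex.betaIntegral, h2]
    apply intervalIntegral.integral_congr
    intro u hu
    rw [Set.uIcc_of_le (by norm_num : (0:ℝ) ≤ 1)] at hu
    have h1 : (0:ℝ) ≤ u := hu.1
    have h2 : (0:ℝ) ≤ 1 - u := by linarith [hu.2]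
    push_cast
    rw [Complex.ofReal_cpow h1, Complex.ofReal_cpow h2]
    push_cast
    ring
  rw [hβ, ← Complex.ofReal_add, Complex.Gamma_ofReal, Complex.Gamma_ofReal,
    Complex.Gamma_ofReal, ← Complex.ofReal_mul, ← Complex.ofReal_mul,
    Complex.ofReal_inj] at h
  have hne : Real.Gamma (p + q) ≠ 0 := (Real.Gamma_pos_of_pos (by linarith)).ne'
  rw [h]
  field_simp

lemma term_integrable {α : ℝ} (hα1 : α < 1) {β s : ℝ} (hβ : 0 ≤ β) (hs : 0 < s) :
    IntervalIntegrable (fun τ : ℝ => (s - τ) ^ (-α) * τ ^ β) volume 0 s := by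
  have h1 : IntervalIntegrable (fun x : ℝ => x ^ (-α)) volume 0 s :=
    intervalIntegral.intervalIntegrable_rpow' (by linarith)
  have h2 := (h1.comp_sub_left s).symm
  simp only [sub_zero, sub_self] at h2
  exact h2.mul_continuousOn (Real.continuous_rpow_const hβ).continuousOn

lemma inner_eval {α : ℝ} (hα0 : 0 < α) (hα1 : α < 1) {β s : ℝ} (hβ : 0 ≤ β) (hs : 0 < s) :
    ∫ τ in (0:ℝ)..s, (s - τ) ^ (-α) * τ ^ β =
      (Real.Gamma (β + 1) * Real.Gamma (1 - α) / Real.Gamma (β + 2 - α)) * s ^ (β + 1 - α) := by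
  have hsub := intervalIntegral.smul_integral_comp_mul_left (a := (0:ℝ)) (b := 1)
    (f := fun τ : ℝ => (s - τ) ^ (-α) * τ ^ β) s
  simp only [smul_eq_mul, mul_zero, mul_one] at hsub
  rw [← hsub]
  have hcongr : (∫ u in (0:ℝ)..1, (s - s*u)^(-α) * (s*u)^β)
      = ∫ u in (0:ℝ)..1, (s^(-α) * s^β) * (u ^ ((β+1)-1) * (1-u)^((1-α)-1)) := by
    apply intervalIntegral.integral_congr
    intro u hu
    rw [Set.uIcc_of_le (by norm_num : (0:ℝ) ≤ 1)] at hu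
    have h1 : 0 ≤ u := hu.1
    have h2 : 0 ≤ 1 - u := by linarith [hu.2]
    dsimp only
    rw [show s - s*u = s * (1-u) by ring, Real.mul_rpow hs.le h2, Real.mul_rpow hs.le h1,
      show (β+1)-1 = β by ring, show (1-α)-1 = -α by ring]
    ring
  rw [hcongr, intervalIntegral.integral_const_mul,
    real_beta (by linarith) (by linarith : (0:ℝ) < 1 - α),
    show (β+1)+(1-α) = β+2-α by ring,
    show β + 1 - α = 1 + (-α + β) by ring, Real.rpow_add hs, Real.rpow_add hs, Real.rpow_one]
  ring

lemma vim_key {α : ℝ} (hα0 : 0 < α) (hα1 : α < 1) {ι : Type*} (F : Finset ι)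
    (c β : ι → ℝ) (hβ : ∀ i ∈ F, 0 ≤ β i) (g : ℝ → ℝ)
    (hg : ∀ τ : ℝ, 0 ≤ τ → g τ = ∑ i ∈ F, c i * τ ^ β i) {t : ℝ} (ht : 0 < t) :
    (∫ ξ in (0:ℝ)..t, (1 / Real.Gamma (1 - α)) *
        deriv (fun s => ∫ τ in (0:ℝ)..s, (s - τ) ^ (-α) * g τ) ξ)
      = ∑ i ∈ F, c i * (Real.Gamma (β i + 1) / Real.Gamma (β i + 2 - α)) * t ^ (β i + 1 - α) := by
  set K : ι → ℝ := fun i => Real.Gamma (β i + 1) * Real.Gamma (1 - α) / Real.Gamma (β i + 2 - α)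
    with hK
  have hinner : ∀ s : ℝ, 0 < s →
      (∫ τ in (0:ℝ)..s, (s - τ) ^ (-α) * g τ) = ∑ i ∈ F, c i * K i * s ^ (β i + 1 - α) := by
    intro s hs
    have e1 : (∫ τ in (0:ℝ)..s, (s - τ) ^ (-α) * g τ)
        = ∫ τ in (0:ℝ)..s, ∑ i ∈ F, c i * ((s - τ) ^ (-α) * τ ^ β i) := by
      apply intervalIntegral.integral_congr
      intro τ hτ
      rw [Set.uIcc_of_le hs.le] at hτ
      dsimp only
      rw [hg τ hτ.1, Finset.mul_sum]
      exact Finset.sum_congr rfl fun i _ => by ring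
    rw [e1, intervalIntegral.integral_finset_sum]
    · exact Finset.sum_congr rfl fun i hi => by
        rw [intervalIntegral.integral_const_mul, inner_eval hα0 hα1 (hβ i hi) hs, hK]; ring
    · intro i hi
      exact (term_integrable hα1 (hβ i hi) hs).const_mul (c i)
  have hderiv : ∀ ξ : ℝ, 0 < ξ →
      deriv (fun s => ∫ τ in (0:ℝ)..s, (s - τ) ^ (-α) * g τ) ξ
        = ∑ i ∈ F, c i * K i * ((β i + 1 - α) * ξ ^ (β i - α)) := by
    intro ξ hξ
    have hEq : (fun s => ∫ τ in (0:ℝ)..s, (s - τ) ^ (-α) * g τ)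
        =ᶠ[nhds ξ] fun s => ∑ i ∈ F, c i * K i * s ^ (β i + 1 - α) := by
      filter_upwards [Ioi_mem_nhds hξ] with s hs
      exact hinner s hs
    rw [hEq.deriv_eq]
    have hd : HasDerivAt (fun s : ℝ => ∑ i ∈ F, c i * K i * s ^ (β i + 1 - α))
        (∑ i ∈ F, c i * K i * ((β i + 1 - α) * ξ ^ (β i + 1 - α - 1))) ξ := by
      apply HasDerivAt.fun_sum
      intro i _
      exact HasDerivAt.const_mul _ (Real.hasDerivAt_rpow_const (Or.inl hξ.ne'))
    rw [hd.deriv]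
    exact Finset.sum_congr rfl fun i _ => by rw [show β i + 1 - α - 1 = β i - α by ring]
  have e2 : (∫ ξ in (0:ℝ)..t, (1 / Real.Gamma (1 - α)) *
      deriv (fun s => ∫ τ in (0:ℝ)..s, (s - τ) ^ (-α) * g τ) ξ)
      = ∫ ξ in (0:ℝ)..t, ∑ i ∈ F,
          (1 / Real.Gamma (1 - α)) * (c i * K i * (β i + 1 - α)) * ξ ^ (β i - α) := by
    apply intervalIntegral.integral_congr_ae
    apply MeasureTheory.ae_of_all
    intro ξ hξ
    rw [Set.uIoc_of_le ht.le] at hξ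
    rw [hderiv ξ hξ.1, Finset.mul_sum]
    exact Finset.sum_congr rfl fun i _ => by ring
  rw [e2, intervalIntegral.integral_finset_sum]
  · apply Finset.sum_congr rfl
    intro i hi
    have hβi := hβ i hi
    rw [intervalIntegral.integral_const_mul,
      integral_rpow (Or.inl (by linarith : (-1:ℝ) < β i - α)),
      Real.zero_rpow (by intro h; nlinarith : β i - α + 1 ≠ 0)]
    have hΓ : Real.Gamma (1 - α) ≠ 0 := (Real.Gamma_pos_of_pos (by linarith)).ne'
    have hΓ2 : Real.Gamma (β i + 2 - α) ≠ 0 := (Real.Gamma_pos_of_pos (by linarith)).ne'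
    have hne : β i + 1 - α ≠ 0 := by intro h; nlinarith
    rw [hK, show β i - α + 1 = β i + 1 - α by ring]
    field_simp
    ring
  · intro i hi
    exact (intervalIntegral.intervalIntegrable_rpow'
      (by have := hβ i hi; linarith)).const_mul _

lemma iter2 (A B c x : ℝ) :
    iteratedDeriv 2 (fun y : ℝ => Real.cos y * A + c * Real.sin y * B) x
      = -Real.cos x * A - c * Real.sin x * B := by
  have h1 : deriv (fun y : ℝ => Real.cos y * A + c * Real.sin y * B)
      = fun y => -Real.sin y * A + c * Real.cos y * B := by
    funext y
    exact (((Real.hasDerivAt_cos y).mul_const A).add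
      (((Real.hasDerivAt_sin y).const_mul c).mul_const B)).deriv
  rw [show (2:ℕ) = 1 + 1 from rfl, iteratedDeriv_succ, iteratedDeriv_one, h1]
  have h2 : HasDerivAt (fun y : ℝ => -Real.sin y * A + c * Real.cos y * B)
      (-Real.cos x * A + c * -Real.sin x * B) x :=
    (((Real.hasDerivAt_sin x).neg.mul_const A).add
      (((Real.hasDerivAt_cos x).const_mul c).mul_const B))
  rw [h2.deriv]; ring

lemma iter2cos (x : ℝ) : iteratedDeriv 2 (fun y : ℝ => Real.cos y) x = -Real.cos x := by
  rw [show (2:ℕ) = 1 + 1 from rfl, iteratedDeriv_succ, iteratedDeriv_one]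
  rw [show (fun y : ℝ => Real.cos y) = Real.cos from rfl, Real.deriv_cos']
  have h2 : HasDerivAt (fun y : ℝ => -Real.sin y) (-Real.cos x) x := (Real.hasDerivAt_sin x).neg
  rw [h2.deriv]

/-- The VIM iterates for the case study: `c₀(x,t) = cos x` and, for `n ≥ 1`,
`cₙ(x,t) = cos x ∑_{k=0}^{n} (-1)^k t^(k(1-α))/Γ(1+k(1-α))
  + t² sin x ∑_{j=0}^{n-1} (-1)^j t^(j(1-α))/Γ(j(1-α)+3)`. -/
noncomputable def vimIter (α : ℝ) : ℕ → ℝ → ℝ → ℝ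
  | 0 => fun x _ => Real.cos x
  | n + 1 => fun x t =>
      Real.cos x *
          (∑ k ∈ Finset.range (n + 2),
            (-1 : ℝ) ^ k * t ^ ((k : ℝ) * (1 - α)) /
              Real.Gamma (1 + (k : ℝ) * (1 - α))) +
        t ^ 2 * Real.sin x *
          (∑ j ∈ Finset.range (n + 1),
            (-1 : ℝ) ^ j * t ^ ((j : ℝ) * (1 - α)) /
              Real.Gamma ((j : ℝ) * (1 - α) + 3))

theorem vimIter_satisfies_recursion (α : ℝ) (hα0 : 0 < α) (hα1 : α < 1) :
    ∀ (n : ℕ) (x t : ℝ), 0 < t →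
      vimIter α (n + 1) x t =
        Real.cos x +
          (∫ ξ in (0:ℝ)..t,
            (1 / Real.Gamma (1 - α)) *
              deriv (fun s => ∫ τ in (0:ℝ)..s,
                (s - τ) ^ (-α) * iteratedDeriv 2 (fun y => vimIter α n y τ) x) ξ) +
          (t ^ 2 / 2) * Real.sin x := by
  intro n x t ht
  have h1α : (0:ℝ) < 1 - α := by linarith
  have hΓ3 : Real.Gamma 3 = 2 := by
    rw [show (3:ℝ) = 2 + 1 by norm_num, Real.Gamma_add_one two_ne_zero, Real.Gamma_two]; norm_num
  match n with
  | 0 =>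
    have hg : ∀ τ : ℝ, 0 ≤ τ →
        iteratedDeriv 2 (fun y => vimIter α 0 y τ) x
          = ∑ i ∈ ({0} : Finset ℕ), (fun _ : ℕ => -Real.cos x) i * τ ^ ((fun _ : ℕ => (0:ℝ)) i) := by
      intro τ _
      simp only [vimIter, Finset.sum_singleton, Real.rpow_zero, mul_one]
      exact iter2cos x
    have key := vim_key hα0 hα1 ({0} : Finset ℕ) (fun _ => -Real.cos x) (fun _ => (0:ℝ))
      (by intro i _; norm_num)
      (fun τ => iteratedDeriv 2 (fun y => vimIter α 0 y τ) x) hg ht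
    rw [key]
    have hΓ2α : Real.Gamma (2 - α) ≠ 0 := (Real.Gamma_pos_of_pos (by linarith)).ne'
    simp only [vimIter, Finset.sum_singleton, Finset.sum_range_succ, Finset.sum_range_zero,
      Nat.cast_zero, Nat.cast_one, zero_mul, one_mul, zero_add, add_zero, Real.rpow_zero,
      pow_zero, pow_one, Real.Gamma_one, mul_one]
    rw [show (1:ℝ) + (1 - α) = 2 - α by ring, hΓ3]
    field_simp
  | m + 1 =>
    set c : ℕ ⊕ ℕ → ℝ := Sum.elim
      (fun k => -Real.cos x * ((-1:ℝ) ^ k / Real.Gamma (1 + (k:ℝ) * (1 - α))))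
      (fun j => -Real.sin x * ((-1:ℝ) ^ j / Real.Gamma ((j:ℝ) * (1 - α) + 3))) with hc
    set βf : ℕ ⊕ ℕ → ℝ := Sum.elim
      (fun k => (k:ℝ) * (1 - α)) (fun j => (j:ℝ) * (1 - α) + 2) with hβf
    have hβ' : ∀ i ∈ (Finset.range (m+2)).disjSum (Finset.range (m+1)), 0 ≤ βf i := by
      rintro (k | j) _
      · exact mul_nonneg (Nat.cast_nonneg _) h1α.le
      · have := mul_nonneg (Nat.cast_nonneg j : (0:ℝ) ≤ (j:ℝ)) h1α.le
        simp only [hβf, Sum.elim_inr]; linarith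
    have hg : ∀ τ : ℝ, 0 ≤ τ →
        iteratedDeriv 2 (fun y => vimIter α (m+1) y τ) x
          = ∑ i ∈ (Finset.range (m+2)).disjSum (Finset.range (m+1)), c i * τ ^ βf i := by
      intro τ hτ
      have hval : (fun y => vimIter α (m+1) y τ)
          = fun y => Real.cos y *
              (∑ k ∈ Finset.range (m + 2),
                (-1 : ℝ) ^ k * τ ^ ((k : ℝ) * (1 - α)) / Real.Gamma (1 + (k : ℝ) * (1 - α))) +
            τ ^ 2 * Real.sin y *
              (∑ j ∈ Finset.range (m + 1),
                (-1 : ℝ) ^ j * τ ^ ((j : ℝ) * (1 - α)) / Real.Gamma ((j : ℝ) * (1 - α) + 3)) := by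
        funext y; simp only [vimIter]
      rw [hval, iter2, Finset.sum_disjSum]
      simp only [hc, hβf, Sum.elim_inl, Sum.elim_inr]
      rw [Finset.mul_sum, Finset.mul_sum, sub_eq_add_neg, ← Finset.sum_neg_distrib]
      congr 1
      · exact Finset.sum_congr rfl fun k _ => by ring
      · refine Finset.sum_congr rfl fun j _ => ?_
        have hjn : (j:ℝ) * (1 - α) + 2 ≠ 0 := by
          have := mul_nonneg (Nat.cast_nonneg j : (0:ℝ) ≤ (j:ℝ)) h1α.le
          intro h; linarith
        rw [Real.rpow_add' hτ hjn, show ((2:ℝ)) = ((2:ℕ):ℝ) by norm_num, Real.rpow_natCast]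
        ring
    have key := vim_key hα0 hα1 ((Finset.range (m+2)).disjSum (Finset.range (m+1))) c βf hβ'
      (fun τ => iteratedDeriv 2 (fun y => vimIter α (m+1) y τ) x) hg ht
    rw [key, Finset.sum_disjSum]
    simp only [hc, hβf, Sum.elim_inl, Sum.elim_inr]
    have hS1 : ∑ k ∈ Finset.range (m+2),
        -Real.cos x * ((-1:ℝ) ^ k / Real.Gamma (1 + (k:ℝ) * (1 - α))) *
          (Real.Gamma ((k:ℝ) * (1 - α) + 1) / Real.Gamma ((k:ℝ) * (1 - α) + 2 - α)) *
          t ^ ((k:ℝ) * (1 - α) + 1 - α)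
        = ∑ k ∈ Finset.range (m+2), Real.cos x *
            ((-1:ℝ) ^ (k+1) * t ^ (((k+1:ℕ):ℝ) * (1 - α)) /
              Real.Gamma (1 + ((k+1:ℕ):ℝ) * (1 - α))) := by
      refine Finset.sum_congr rfl fun k _ => ?_
      have hk0 : (0:ℝ) ≤ (k:ℝ) * (1-α) := mul_nonneg (Nat.cast_nonneg _) h1α.le
      have hne1 : Real.Gamma (1 + (k:ℝ) * (1 - α)) ≠ 0 :=
        (Real.Gamma_pos_of_pos (by linarith)).ne'
      have hne2 : Real.Gamma (1 + ((k:ℝ)+1) * (1 - α)) ≠ 0 :=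
        (Real.Gamma_pos_of_pos (by nlinarith)).ne'
      push_cast
      rw [show (k:ℝ) * (1-α) + 1 - α = ((k:ℝ)+1) * (1-α) by ring,
        show (k:ℝ) * (1-α) + 2 - α = 1 + ((k:ℝ)+1) * (1-α) by ring,
        show (k:ℝ) * (1-α) + 1 = 1 + (k:ℝ) * (1-α) by ring, pow_succ]
      field_simp
    have hS2 : ∑ j ∈ Finset.range (m+1),
        -Real.sin x * ((-1:ℝ) ^ j / Real.Gamma ((j:ℝ) * (1 - α) + 3)) *
          (Real.Gamma ((j:ℝ) * (1 - α) + 2 + 1) / Real.Gamma ((j:ℝ) * (1 - α) + 2 + 2 - α)) *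
          t ^ ((j:ℝ) * (1 - α) + 2 + 1 - α)
        = ∑ j ∈ Finset.range (m+1), t ^ 2 * Real.sin x *
            ((-1:ℝ) ^ (j+1) * t ^ (((j+1:ℕ):ℝ) * (1 - α)) /
              Real.Gamma (((j+1:ℕ):ℝ) * (1 - α) + 3)) := by
      refine Finset.sum_congr rfl fun j _ => ?_
      have hj0 : (0:ℝ) ≤ (j:ℝ) * (1-α) := mul_nonneg (Nat.cast_nonneg _) h1α.le
      have hne1 : Real.Gamma ((j:ℝ) * (1 - α) + 3) ≠ 0 :=
        (Real.Gamma_pos_of_pos (by linarith)).ne'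
      have hne2 : Real.Gamma (((j:ℝ)+1) * (1 - α) + 3) ≠ 0 :=
        (Real.Gamma_pos_of_pos (by nlinarith)).ne'
      push_cast
      rw [show (j:ℝ) * (1-α) + 2 + 1 - α = ((j:ℝ)+1) * (1-α) + 2 by ring,
        show (j:ℝ) * (1-α) + 2 + 2 - α = ((j:ℝ)+1) * (1-α) + 3 by ring,
        show (j:ℝ) * (1-α) + 2 + 1 = (j:ℝ) * (1-α) + 3 by ring,
        Real.rpow_add ht, show ((2:ℝ)) = ((2:ℕ):ℝ) by norm_num, Real.rpow_natCast, pow_succ]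
      field_simp
      ring
    rw [hS1, hS2]
    simp only [vimIter]
    rw [show m+1+2 = (m+2)+1 from rfl,
      Finset.sum_range_succ'
        (fun k : ℕ => (-1:ℝ) ^ k * t ^ ((k:ℝ) * (1 - α)) / Real.Gamma (1 + (k:ℝ) * (1 - α)))
        (m+2),
      Finset.sum_range_succ'
        (fun j : ℕ => (-1:ℝ) ^ j * t ^ ((j:ℝ) * (1 - α)) / Real.Gamma ((j:ℝ) * (1 - α) + 3))
        (m+1)]
    simp only [Nat.cast_zero, zero_mul, Real.rpow_zero, pow_zero, add_zero, zero_add,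
      Real.Gamma_one, hΓ3, mul_one, one_mul]
    rw [← Finset.mul_sum, ← Finset.mul_sum]
    ring
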